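/- Let p and q be probability density functions on ℝ with common support R. The differential Rényi cross-entropy h_α(p;q) is monotonically decreasing (nonincreasing) in α for α > 0, α ≠ 1: for all 0 < α₁ < α₂ with α₁, α₂ ≠ 1 such that h_{α₁}(p;q) and h_{α₂}(p;q) are well defined and finite (and, if α₁ < 1 < α₂, such that h(p;q) is finite and E_{A∼p}[1/q(A)] < ∞), one has h_{α₂}(p;q) ≤ h_{α₁}(p;q). -/

import Mathlib

open MeasureTheory Filter Topology Set

/-- Jensen's inequality for concave `x ↦ x^r`, `0 < r < 1`, via weighted AM-GM. -/
lemma aux_jensen_rpow {X : Type*} [MeasurableSpace X] {ν : Measure X} [IsProbabilityMeasure ν]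
    {g : X → ℝ} {r : ℝ} (hr0 : 0 < r) (hr1 : r < 1)
    (hg0 : ∀ᵐ x ∂ν, 0 ≤ g x) (hgi : Integrable g ν)
    (hgr : Integrable (fun x => g x ^ r) ν) :
    ∫ x, g x ^ r ∂ν ≤ (∫ x, g x ∂ν) ^ r := by
  set I := ∫ x, g x ∂ν with hIdef
  have hI0 : 0 ≤ I := integral_nonneg_of_ae hg0
  rcases hI0.eq_or_lt with h | hIpos
  · have hg0' : g =ᵐ[ν] 0 := (integral_eq_zero_iff_of_nonneg_ae hg0 hgi).mp h.symm
    have hzz : (fun x => g x ^ r) =ᵐ[ν] 0 := by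
      filter_upwards [hg0'] with x hx
      simp [hx, Real.zero_rpow hr0.ne']
    rw [integral_congr_ae hzz]
    simp [← h, Real.zero_rpow hr0.ne']
  · have key : ∫ x, g x ^ r * I ^ (1 - r) ∂ν ≤ ∫ x, (r * g x + (1 - r) * I) ∂ν := by
      apply integral_mono_ae (hgr.mul_const _) ((hgi.const_mul r).add (integrable_const _))
      filter_upwards [hg0] with x hx
      exact Real.geom_mean_le_arith_mean2_weighted hr0.le (by linarith) hx hI0 (by ring)
    rw [integral_mul_const, integral_add (hgi.const_mul r) (integrable_const _),
      integral_const_mul, integral_const] at key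
    simp only [measure_univ, probReal_univ, ENNReal.toReal_one, one_smul, ← hIdef] at key
    have hIr : (0:ℝ) < I ^ (1 - r) := Real.rpow_pos_of_pos hIpos _
    have hmul : I ^ r * I ^ (1 - r) = I := by
      rw [← Real.rpow_add hIpos]; norm_num
    have : (∫ x, g x ^ r ∂ν) * I ^ (1 - r) ≤ I ^ r * I ^ (1 - r) := by
      rw [hmul]; linarith
    exact le_of_mul_le_mul_right this hIr

/-- Jensen's inequality for the logarithm, via `log x ≤ x - 1`. -/
lemma aux_jensen_log {X : Type*} [MeasurableSpace X] {ν : Measure X} [IsProbabilityMeasure ν]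
    {g : X → ℝ} (hg0 : ∀ᵐ x ∂ν, 0 < g x) (hgi : Integrable g ν)
    (hgl : Integrable (fun x => Real.log (g x)) ν) :
    ∫ x, Real.log (g x) ∂ν ≤ Real.log (∫ x, g x ∂ν) := by
  set I := ∫ x, g x ∂ν with hIdef
  have hIpos : 0 < I := by
    rcases (integral_nonneg_of_ae (hg0.mono fun x hx => hx.le)).eq_or_lt with h | h
    · exfalso
      have hg0' : g =ᵐ[ν] 0 :=
        (integral_eq_zero_iff_of_nonneg_ae (hg0.mono fun x hx => hx.le) hgi).mp h.symm
      have hfalse : ∀ᵐ x ∂ν, False := by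
        filter_upwards [hg0', hg0] with x h1 h2
        exact absurd h1 h2.ne'
      have : ν Set.univ = 0 := by simpa [ae_iff] using hfalse
      simp [measure_univ] at this
    · exact h
  have hpt : ∀ᵐ x ∂ν, Real.log (g x) ≤ g x * I⁻¹ + (Real.log I - 1) := by
    filter_upwards [hg0] with x hx
    have h1 := Real.log_le_sub_one_of_pos (div_pos hx hIpos)
    rw [Real.log_div hx.ne' hIpos.ne'] at h1
    have : g x / I = g x * I⁻¹ := div_eq_mul_inv _ _
    linarith
  have hRint : Integrable (fun x => g x * I⁻¹ + (Real.log I - 1)) ν :=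
    (hgi.mul_const I⁻¹).add (integrable_const _)
  have hle := integral_mono_ae hgl hRint hpt
  rw [integral_add (hgi.mul_const I⁻¹) (integrable_const _), integral_mul_const,
    integral_const] at hle
  simp only [measure_univ, probReal_univ, ENNReal.toReal_one, one_smul, ← hIdef] at hle
  rw [mul_inv_cancel₀ hIpos.ne'] at hle
  linarith

theorem stmt_8
    (p q : ℝ → ℝ) (R : Set ℝ) (hR : MeasurableSet R)
    (hp_meas : Measurable p) (hq_meas : Measurable q)
    (hp_nonneg : ∀ x, 0 ≤ p x) (hq_nonneg : ∀ x, 0 ≤ q x)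
    (hp_pos : ∀ x ∈ R, 0 < p x) (hq_pos : ∀ x ∈ R, 0 < q x)
    (hp_int : IntegrableOn p R) (hq_int : IntegrableOn q R)
    (hp_one : ∫ x in R, p x = 1) (hq_one : ∫ x in R, q x = 1)
    (α₁ α₂ : ℝ) (hα₁_pos : 0 < α₁) (hα₁₂ : α₁ < α₂) (hα₁ : α₁ ≠ 1) (hα₂ : α₂ ≠ 1)
    (h_int₁ : IntegrableOn (fun x => p x * q x ^ (α₁ - 1)) R)
    (h_int₂ : IntegrableOn (fun x => p x * q x ^ (α₂ - 1)) R)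
    (h_cross : α₁ < 1 → 1 < α₂ →
      IntegrableOn (fun x => p x * Real.log (q x)) R ∧
      IntegrableOn (fun x => p x / q x) R) :
    (1 / (1 - α₂)) * Real.log (∫ x in R, p x * q x ^ (α₂ - 1)) ≤
      (1 / (1 - α₁)) * Real.log (∫ x in R, p x * q x ^ (α₁ - 1)) := by
  classical
  set pn : ℝ → NNReal := fun x => (p x).toNNReal with hpn
  have hpn_meas : Measurable pn := hp_meas.real_toNNReal
  have hcoe : ∀ x, ((pn x : ℝ)) = p x := fun x => Real.coe_toNNReal _ (hp_nonneg x)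
  set ν := (volume.restrict R).withDensity (fun x => pn x) with hν
  -- ν is a probability measure
  have hprob : IsProbabilityMeasure ν := by
    constructor
    rw [hν, withDensity_apply _ MeasurableSet.univ, Measure.restrict_univ,
      lintegral_coe_eq_integral pn (by simpa only [hcoe] using hp_int.integrable)]
    simp only [hcoe]
    rw [hp_one]
    norm_num
  -- translation of integrals and integrability
  have hInt_eq : ∀ f : ℝ → ℝ, ∫ x, f x ∂ν = ∫ x in R, p x * f x := by
    intro f
    rw [hν, integral_withDensity_eq_integral_smul hpn_meas]
    simp only [NNReal.smul_def, hcoe, smul_eq_mul]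
  have hIntgr : ∀ f : ℝ → ℝ, IntegrableOn (fun x => p x * f x) R → Integrable f ν := by
    intro f hf
    rw [hν, integrable_withDensity_iff_integrable_smul hpn_meas]
    simpa only [NNReal.smul_def, hcoe, smul_eq_mul] using hf.integrable
  have haeR : ∀ᵐ x ∂ν, x ∈ R := by
    rw [hν]
    exact (ae_restrict_mem hR).filter_mono
      (withDensity_absolutelyContinuous (volume.restrict R) _).ae_le
  have hqpos : ∀ᵐ x ∂ν, 0 < q x := haeR.mono fun x hx => hq_pos x hx
  set t₁ := α₁ - 1 with ht₁
  set t₂ := α₂ - 1 with ht₂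
  have hint1 : Integrable (fun x => q x ^ t₁) ν := hIntgr _ h_int₁
  have hint2 : Integrable (fun x => q x ^ t₂) ν := hIntgr _ h_int₂
  have hIpos : ∀ t : ℝ, Integrable (fun x => q x ^ t) ν → 0 < ∫ x, q x ^ t ∂ν := by
    intro t hint
    have hnn : ∀ᵐ x ∂ν, 0 ≤ q x ^ t :=
      hqpos.mono fun x hx => (Real.rpow_pos_of_pos hx t).le
    rcases (integral_nonneg_of_ae hnn).eq_or_lt with h | h
    · exfalso
      have h0 : (fun x => q x ^ t) =ᵐ[ν] 0 :=
        (integral_eq_zero_iff_of_nonneg_ae hnn hint).mp h.symm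
      have hfalse : ∀ᵐ x ∂ν, False := by
        filter_upwards [h0, hqpos] with x h1 h2
        exact absurd h1 (Real.rpow_pos_of_pos h2 t).ne'
      have : ν Set.univ = 0 := by simpa [ae_iff] using hfalse
      simp [measure_univ] at this
    · exact h
  have hI1pos : 0 < ∫ x, q x ^ t₁ ∂ν := hIpos _ hint1
  have hI2pos : 0 < ∫ x, q x ^ t₂ ∂ν := hIpos _ hint2
  have ht₁ne : t₁ ≠ 0 := sub_ne_zero.mpr hα₁
  have ht₂ne : t₂ ≠ 0 := sub_ne_zero.mpr hα₂
  rw [show (∫ x in R, p x * q x ^ (α₂ - 1)) = ∫ x, q x ^ t₂ ∂ν from (hInt_eq _).symm,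
    show (∫ x in R, p x * q x ^ (α₁ - 1)) = ∫ x, q x ^ t₁ ∂ν from (hInt_eq _).symm]
  set I₁ := ∫ x, q x ^ t₁ ∂ν with hI₁
  set I₂ := ∫ x, q x ^ t₂ ∂ν with hI₂
  rcases lt_trichotomy α₂ 1 with hc | hc | hc
  · -- both < 1 : t₁ < t₂ < 0
    have ht₂neg : t₂ < 0 := by rw [ht₂]; linarith
    have ht₁neg : t₁ < 0 := by rw [ht₁]; linarith
    have hr0 : 0 < t₂ / t₁ := div_pos_of_neg_of_neg ht₂neg ht₁neg
    have hr1 : t₂ / t₁ < 1 := by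
      rw [div_lt_one_of_neg ht₁neg]; rw [ht₁, ht₂]; linarith
    have hcongr : (fun x => (q x ^ t₁) ^ (t₂ / t₁)) =ᵐ[ν] fun x => q x ^ t₂ := by
      filter_upwards [hqpos] with x hx
      rw [← Real.rpow_mul hx.le, mul_div_cancel₀ _ ht₁ne]
    have hJ : I₂ ≤ I₁ ^ (t₂ / t₁) := by
      rw [hI₂, ← integral_congr_ae hcongr]
      exact aux_jensen_rpow hr0 hr1
        (hqpos.mono fun x hx => (Real.rpow_pos_of_pos hx t₁).le) hint1
        (hint2.congr hcongr.symm)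
    have hlog : Real.log I₂ ≤ (t₂ / t₁) * Real.log I₁ := by
      calc Real.log I₂ ≤ Real.log (I₁ ^ (t₂ / t₁)) :=
            Real.log_le_log hI2pos hJ
        _ = (t₂ / t₁) * Real.log I₁ := Real.log_rpow hI1pos _
    have hpos2 : (0:ℝ) < 1 / (1 - α₂) := by
      apply div_pos one_pos; linarith
    calc (1 / (1 - α₂)) * Real.log I₂ ≤ (1 / (1 - α₂)) * ((t₂ / t₁) * Real.log I₁) :=
          mul_le_mul_of_nonneg_left hlog hpos2.le
      _ = (1 / (1 - α₁)) * Real.log I₁ := by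
          rw [ht₁, ht₂]
          have h1 : (1:ℝ) - α₁ ≠ 0 := by intro h; apply hα₁; linarith
          have h2 : (1:ℝ) - α₂ ≠ 0 := by intro h; apply hα₂; linarith
          field_simp
          ring
  · exact absurd hc hα₂
  · rcases lt_trichotomy α₁ 1 with hc1 | hc1 | hc1
    · -- cross case : t₁ < 0 < t₂
      have ht₁neg : t₁ < 0 := by rw [ht₁]; linarith
      have ht₂pos : 0 < t₂ := by rw [ht₂]; linarith
      have hlogint : Integrable (fun x => Real.log (q x)) ν :=
        hIntgr _ (h_cross hc1 hc).1
      set L := ∫ x, Real.log (q x) ∂ν with hL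
      have hlogJ : ∀ t : ℝ, Integrable (fun x => q x ^ t) ν →
          t * L ≤ Real.log (∫ x, q x ^ t ∂ν) := by
        intro t hint
        have hcongr : (fun x => Real.log (q x ^ t)) =ᵐ[ν] fun x => t * Real.log (q x) := by
          filter_upwards [hqpos] with x hx
          rw [Real.log_rpow hx]
        have := aux_jensen_log (g := fun x => q x ^ t)
          (hqpos.mono fun x hx => Real.rpow_pos_of_pos hx t) hint
          ((hlogint.const_mul t).congr hcongr.symm)
        rwa [integral_congr_ae hcongr, integral_const_mul] at this
      have h1 := hlogJ t₁ hint1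
      have h2 := hlogJ t₂ hint2
      rw [← hI₁] at h1
      rw [← hI₂] at h2
      have hd1 : Real.log I₁ / t₁ ≤ L := by
        rw [div_le_iff_of_neg ht₁neg]; linarith
      have hd2 : L ≤ Real.log I₂ / t₂ := by
        rw [le_div_iff₀ ht₂pos]; linarith
      have e1 : (1 / (1 - α₁)) * Real.log I₁ = -(Real.log I₁ / t₁) := by
        rw [ht₁]
        have h1' : (1:ℝ) - α₁ ≠ 0 := by intro h; apply hα₁; linarith
        field_simp
        ring
      have e2 : (1 / (1 - α₂)) * Real.log I₂ = -(Real.log I₂ / t₂) := by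
        rw [ht₂]
        have h2' : (1:ℝ) - α₂ ≠ 0 := by intro h; apply hα₂; linarith
        field_simp
        ring
      rw [e1, e2]
      have := hd1.trans hd2
      linarith
    · exact absurd hc1 hα₁
    · -- both > 1 : 0 < t₁ < t₂
      have ht₁pos : 0 < t₁ := by rw [ht₁]; linarith
      have ht₂pos : 0 < t₂ := by rw [ht₂]; linarith
      have hr0 : 0 < t₁ / t₂ := div_pos ht₁pos ht₂pos
      have hr1 : t₁ / t₂ < 1 := by
        rw [div_lt_one ht₂pos]; rw [ht₁, ht₂]; linarith
      have hcongr : (fun x => (q x ^ t₂) ^ (t₁ / t₂)) =ᵐ[ν] fun x => q x ^ t₁ := by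
        filter_upwards [hqpos] with x hx
        rw [← Real.rpow_mul hx.le, mul_div_cancel₀ _ ht₂ne]
      have hJ : I₁ ≤ I₂ ^ (t₁ / t₂) := by
        rw [hI₁, ← integral_congr_ae hcongr]
        exact aux_jensen_rpow hr0 hr1
          (hqpos.mono fun x hx => (Real.rpow_pos_of_pos hx t₂).le) hint2
          (hint1.congr hcongr.symm)
      have hlog : Real.log I₁ ≤ (t₁ / t₂) * Real.log I₂ := by
        calc Real.log I₁ ≤ Real.log (I₂ ^ (t₁ / t₂)) :=
              Real.log_le_log hI1pos hJ
          _ = (t₁ / t₂) * Real.log I₂ := Real.log_rpow hI2pos _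
      have hneg1 : 1 / (1 - α₁) < 0 := by
        apply div_neg_of_pos_of_neg one_pos; linarith
      calc (1 / (1 - α₂)) * Real.log I₂
          = (1 / (1 - α₁)) * ((t₁ / t₂) * Real.log I₂) := by
            rw [ht₁, ht₂]
            have h1 : (1:ℝ) - α₁ ≠ 0 := by intro h; apply hα₁; linarith
            have h2 : (1:ℝ) - α₂ ≠ 0 := by intro h; apply hα₂; linarith
            field_simp
            ring
        _ ≤ (1 / (1 - α₁)) * Real.log I₁ :=
            mul_le_mul_of_nonpos_left hlog hneg1.le
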